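/- There exists a finite simple graph G such that, with threshold τ = 1, the dominating set output by the two-step algorithm on G using the measure SV is strictly smaller than the dominating set output by the two-step algorithm on G using the measure RND. -/

import Mathlib

/-- The degree of a vertex in a finite simple graph. -/
noncomputable def deg {V : Type*} [Fintype V] (G : SimpleGraph V) (v : V) : ℕ := by
  classical exact G.degree v

/-- The Shapley value of a vertex: the sum of reciprocals of its neighbors' degrees. -/
noncomputable def SV {V : Type*} [Fintype V] (G : SimpleGraph V) (v : V) : ℝ := by
  classical exact ∑ u ∈ G.neighborFinset v, (1 : ℝ) / (G.degree u)

/-- The relative neighbor-degree of a vertex: deg(v)^2 divided by the sum of neighbors' degrees. -/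
noncomputable def RND {V : Type*} [Fintype V] (G : SimpleGraph V) (v : V) : ℝ := by
  classical exact (G.degree v : ℝ) ^ 2 / ∑ u ∈ G.neighborFinset v, (G.degree u : ℝ)

/-- The dominating set output by the two-step algorithm with measure c and threshold t. -/
noncomputable def twoStep {V : Type*} [Fintype V] (G : SimpleGraph V) (c : V → ℝ) (t : ℝ) :
    Set V :=
  {v : V | c v > t} ∪ {v : V | (insert v (G.neighborSet v)) ∩ {u : V | c u > t} = ∅}

def L7 : List (Fin 7 × Fin 7) :=
  [(0,1),(1,2),(2,3),(2,4),(3,4),(3,5),(3,6),(4,5),(4,6),(5,6)]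

def G7 : SimpleGraph (Fin 7) where
  Adj v w := (v,w) ∈ L7 ∨ (w,v) ∈ L7
  symm := by constructor; intro v w h; exact h.symm
  loopless := by constructor; intro v h; exact absurd h (by clear h; revert v; decide)

instance : DecidableRel G7.Adj := fun v w =>
  inferInstanceAs (Decidable ((v,w) ∈ L7 ∨ (w,v) ∈ L7))

def nfT : Fin 7 → Finset (Fin 7) :=
  ![{1},{0,2},{1,3,4},{2,4,5,6},{2,3,5,6},{3,4,6},{3,4,5}]

def degT : Fin 7 → ℕ := ![1,2,3,4,4,3,3]

noncomputable def svT : Fin 7 → ℝ := ![1/2, 4/3, 1, 5/4, 5/4, 5/6, 5/6]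

noncomputable def rndT : Fin 7 → ℝ := ![1/2, 1, 9/10, 16/13, 16/13, 9/11, 9/11]

lemma nf_eq (v : Fin 7) (i : Fintype (G7.neighborSet v)) :
    @SimpleGraph.neighborFinset _ G7 v i = nfT v := by
  ext u
  rw [SimpleGraph.mem_neighborFinset]
  revert u
  fin_cases v <;> decide

lemma deg_eq (v : Fin 7) (i : Fintype (G7.neighborSet v)) :
    @SimpleGraph.degree _ G7 v i = (nfT v).card := by
  rw [← SimpleGraph.card_neighborFinset_eq_degree, nf_eq]

lemma deg_val (v : Fin 7) (i : Fintype (G7.neighborSet v)) :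
    @SimpleGraph.degree _ G7 v i = degT v := by
  rw [deg_eq]; fin_cases v <;> decide
lemma nfT0 : nfT 0 = ({1} : Finset (Fin 7)) := rfl
lemma nfT1 : nfT 1 = ({0, 2} : Finset (Fin 7)) := rfl
lemma nfT2 : nfT 2 = ({1, 3, 4} : Finset (Fin 7)) := rfl
lemma nfT3 : nfT 3 = ({2, 4, 5, 6} : Finset (Fin 7)) := rfl
lemma nfT4 : nfT 4 = ({2, 3, 5, 6} : Finset (Fin 7)) := rfl
lemma nfT5 : nfT 5 = ({3, 4, 6} : Finset (Fin 7)) := rfl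
lemma nfT6 : nfT 6 = ({3, 4, 5} : Finset (Fin 7)) := rfl
lemma degT0 : degT 0 = 1 := rfl
lemma degT1 : degT 1 = 2 := rfl
lemma degT2 : degT 2 = 3 := rfl
lemma degT3 : degT 3 = 4 := rfl
lemma degT4 : degT 4 = 4 := rfl
lemma degT5 : degT 5 = 3 := rfl
lemma degT6 : degT 6 = 3 := rfl
lemma svT0 : svT 0 = 1/2 := rfl
lemma svT1 : svT 1 = 4/3 := rfl
lemma svT2 : svT 2 = 1 := rfl
lemma svT3 : svT 3 = 5/4 := rfl
lemma svT4 : svT 4 = 5/4 := rfl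
lemma svT5 : svT 5 = 5/6 := rfl
lemma svT6 : svT 6 = 5/6 := rfl
lemma rndT0 : rndT 0 = 1/2 := rfl
lemma rndT1 : rndT 1 = 1 := rfl
lemma rndT2 : rndT 2 = 9/10 := rfl
lemma rndT3 : rndT 3 = 16/13 := rfl
lemma rndT4 : rndT 4 = 16/13 := rfl
lemma rndT5 : rndT 5 = 9/11 := rfl
lemma rndT6 : rndT 6 = 9/11 := rfl

lemma sv_val (v : Fin 7) : SV G7 v = svT v := by
  unfold SV
  rw [nf_eq]
  simp only [deg_val]
  fin_cases v
  · show ∑ u ∈ nfT 0, (1:ℝ) / (degT u) = svT 0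
    rw [nfT0, svT0]
    repeat rw [Finset.sum_insert (by decide)]
    rw [Finset.sum_singleton]
    norm_num [degT0, degT1, degT2, degT3, degT4, degT5, degT6]
  · show ∑ u ∈ nfT 1, (1:ℝ) / (degT u) = svT 1
    rw [nfT1, svT1]
    repeat rw [Finset.sum_insert (by decide)]
    rw [Finset.sum_singleton]
    norm_num [degT0, degT1, degT2, degT3, degT4, degT5, degT6]
  · show ∑ u ∈ nfT 2, (1:ℝ) / (degT u) = svT 2
    rw [nfT2, svT2]
    repeat rw [Finset.sum_insert (by decide)]
    rw [Finset.sum_singleton]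
    norm_num [degT0, degT1, degT2, degT3, degT4, degT5, degT6]
  · show ∑ u ∈ nfT 3, (1:ℝ) / (degT u) = svT 3
    rw [nfT3, svT3]
    repeat rw [Finset.sum_insert (by decide)]
    rw [Finset.sum_singleton]
    norm_num [degT0, degT1, degT2, degT3, degT4, degT5, degT6]
  · show ∑ u ∈ nfT 4, (1:ℝ) / (degT u) = svT 4
    rw [nfT4, svT4]
    repeat rw [Finset.sum_insert (by decide)]
    rw [Finset.sum_singleton]
    norm_num [degT0, degT1, degT2, degT3, degT4, degT5, degT6]
  · show ∑ u ∈ nfT 5, (1:ℝ) / (degT u) = svT 5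
    rw [nfT5, svT5]
    repeat rw [Finset.sum_insert (by decide)]
    rw [Finset.sum_singleton]
    norm_num [degT0, degT1, degT2, degT3, degT4, degT5, degT6]
  · show ∑ u ∈ nfT 6, (1:ℝ) / (degT u) = svT 6
    rw [nfT6, svT6]
    repeat rw [Finset.sum_insert (by decide)]
    rw [Finset.sum_singleton]
    norm_num [degT0, degT1, degT2, degT3, degT4, degT5, degT6]

lemma rnd_val (v : Fin 7) : RND G7 v = rndT v := by
  unfold RND
  rw [nf_eq]
  simp only [deg_val]
  fin_cases v
  · show ((degT 0 : ℝ))^2 / ∑ u ∈ nfT 0, ((degT u : ℕ) : ℝ) = rndT 0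
    rw [nfT0, rndT0]
    repeat rw [Finset.sum_insert (by decide)]
    rw [Finset.sum_singleton]
    norm_num [degT0, degT1, degT2, degT3, degT4, degT5, degT6]
  · show ((degT 1 : ℝ))^2 / ∑ u ∈ nfT 1, ((degT u : ℕ) : ℝ) = rndT 1
    rw [nfT1, rndT1]
    repeat rw [Finset.sum_insert (by decide)]
    rw [Finset.sum_singleton]
    norm_num [degT0, degT1, degT2, degT3, degT4, degT5, degT6]
  · show ((degT 2 : ℝ))^2 / ∑ u ∈ nfT 2, ((degT u : ℕ) : ℝ) = rndT 2
    rw [nfT2, rndT2]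
    repeat rw [Finset.sum_insert (by decide)]
    rw [Finset.sum_singleton]
    norm_num [degT0, degT1, degT2, degT3, degT4, degT5, degT6]
  · show ((degT 3 : ℝ))^2 / ∑ u ∈ nfT 3, ((degT u : ℕ) : ℝ) = rndT 3
    rw [nfT3, rndT3]
    repeat rw [Finset.sum_insert (by decide)]
    rw [Finset.sum_singleton]
    norm_num [degT0, degT1, degT2, degT3, degT4, degT5, degT6]
  · show ((degT 4 : ℝ))^2 / ∑ u ∈ nfT 4, ((degT u : ℕ) : ℝ) = rndT 4
    rw [nfT4, rndT4]
    repeat rw [Finset.sum_insert (by decide)]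
    rw [Finset.sum_singleton]
    norm_num [degT0, degT1, degT2, degT3, degT4, degT5, degT6]
  · show ((degT 5 : ℝ))^2 / ∑ u ∈ nfT 5, ((degT u : ℕ) : ℝ) = rndT 5
    rw [nfT5, rndT5]
    repeat rw [Finset.sum_insert (by decide)]
    rw [Finset.sum_singleton]
    norm_num [degT0, degT1, degT2, degT3, degT4, degT5, degT6]
  · show ((degT 6 : ℝ))^2 / ∑ u ∈ nfT 6, ((degT u : ℕ) : ℝ) = rndT 6
    rw [nfT6, rndT6]
    repeat rw [Finset.sum_insert (by decide)]
    rw [Finset.sum_singleton]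
    norm_num [degT0, degT1, degT2, degT3, degT4, degT5, degT6]

lemma hSV : ∀ u : Fin 7, (SV G7 u > 1 ↔ (u = 1 ∨ u = 3 ∨ u = 4)) := by
  intro u
  rw [sv_val]
  fin_cases u
  · show svT 0 > 1 ↔ ((0 : Fin 7) = 1 ∨ (0 : Fin 7) = 3 ∨ (0 : Fin 7) = 4)
    rw [svT0]
    norm_num <;> decide
  · show svT 1 > 1 ↔ ((1 : Fin 7) = 1 ∨ (1 : Fin 7) = 3 ∨ (1 : Fin 7) = 4)
    rw [svT1]
    norm_num <;> decide
  · show svT 2 > 1 ↔ ((2 : Fin 7) = 1 ∨ (2 : Fin 7) = 3 ∨ (2 : Fin 7) = 4)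
    rw [svT2]
    norm_num <;> decide
  · show svT 3 > 1 ↔ ((3 : Fin 7) = 1 ∨ (3 : Fin 7) = 3 ∨ (3 : Fin 7) = 4)
    rw [svT3]
    norm_num <;> decide
  · show svT 4 > 1 ↔ ((4 : Fin 7) = 1 ∨ (4 : Fin 7) = 3 ∨ (4 : Fin 7) = 4)
    rw [svT4]
    norm_num <;> decide
  · show svT 5 > 1 ↔ ((5 : Fin 7) = 1 ∨ (5 : Fin 7) = 3 ∨ (5 : Fin 7) = 4)
    rw [svT5]
    norm_num <;> decide
  · show svT 6 > 1 ↔ ((6 : Fin 7) = 1 ∨ (6 : Fin 7) = 3 ∨ (6 : Fin 7) = 4)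
    rw [svT6]
    norm_num <;> decide

lemma hRND : ∀ u : Fin 7, (RND G7 u > 1 ↔ (u = 3 ∨ u = 4)) := by
  intro u
  rw [rnd_val]
  fin_cases u
  · show rndT 0 > 1 ↔ ((0 : Fin 7) = 3 ∨ (0 : Fin 7) = 4)
    rw [rndT0]
    norm_num <;> decide
  · show rndT 1 > 1 ↔ ((1 : Fin 7) = 3 ∨ (1 : Fin 7) = 4)
    rw [rndT1]
    norm_num <;> decide
  · show rndT 2 > 1 ↔ ((2 : Fin 7) = 3 ∨ (2 : Fin 7) = 4)
    rw [rndT2]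
    norm_num <;> decide
  · show rndT 3 > 1 ↔ ((3 : Fin 7) = 3 ∨ (3 : Fin 7) = 4)
    rw [rndT3]
    norm_num <;> decide
  · show rndT 4 > 1 ↔ ((4 : Fin 7) = 3 ∨ (4 : Fin 7) = 4)
    rw [rndT4]
    norm_num <;> decide
  · show rndT 5 > 1 ↔ ((5 : Fin 7) = 3 ∨ (5 : Fin 7) = 4)
    rw [rndT5]
    norm_num <;> decide
  · show rndT 6 > 1 ↔ ((6 : Fin 7) = 3 ∨ (6 : Fin 7) = 4)
    rw [rndT6]
    norm_num <;> decide

lemma twoStep_SV : twoStep G7 (SV G7) 1 = ({1, 3, 4} : Set (Fin 7)) := by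
  unfold twoStep
  ext v
  simp only [Set.mem_union, Set.mem_setOf_eq, Set.eq_empty_iff_forall_notMem,
    Set.mem_inter_iff, Set.mem_insert_iff, Set.mem_singleton_iff,
    SimpleGraph.mem_neighborSet, hSV, gt_iff_lt]
  revert v
  decide

lemma twoStep_RND : twoStep G7 (RND G7) 1 = ({0, 1, 3, 4} : Set (Fin 7)) := by
  unfold twoStep
  ext v
  simp only [Set.mem_union, Set.mem_setOf_eq, Set.eq_empty_iff_forall_notMem,
    Set.mem_inter_iff, Set.mem_insert_iff, Set.mem_singleton_iff,
    SimpleGraph.mem_neighborSet, hRND, gt_iff_lt]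
  revert v
  decide

/-- There is a graph on which, with threshold 1, the two-step algorithm with SV produces a
strictly smaller dominating set than with RND. -/
theorem two_step_sv_lt_rnd_at_one :
    ∃ (n : ℕ) (G : SimpleGraph (Fin n)),
      (twoStep G (SV G) 1).ncard < (twoStep G (RND G) 1).ncard := by
  refine ⟨7, G7, ?_⟩
  have h4 : ({0, 1, 3, 4} : Set (Fin 7)).ncard = 4 := by
    rw [show ({0, 1, 3, 4} : Set (Fin 7)) = (({0, 1, 3, 4} : Finset (Fin 7)) : Set (Fin 7)) by simp]
    rw [Set.ncard_coe_finset]; decide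
  have h3 : ({1, 3, 4} : Set (Fin 7)).ncard = 3 := by
    rw [show ({1, 3, 4} : Set (Fin 7)) = (({1, 3, 4} : Finset (Fin 7)) : Set (Fin 7)) by simp]
    rw [Set.ncard_coe_finset]; decide
  rw [twoStep_SV, twoStep_RND, h4, h3]
  norm_num
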